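/- Let a : ℕ → ℝ satisfy a(0) ≥ 0 and a(t+1) = a(t) + √(8·a(t)) + 2 for all t ≥ 0. Then for every t ≥ 0: √(8·a(t)) − √(8·a(0)) ≤ 4t + 2·ln(1 + 2t). -/
import Mathlib


/-- Growth bound for the recursion `a(t+1) = a(t) + √(8 a(t)) + 2`:
`√(8 a(t)) − √(8 a(0)) ≤ 4t + 2 ln(1 + 2t)`. -/
theorem sqrt_recursion_growth_bound
    (a : ℕ → ℝ) (h0 : 0 ≤ a 0)
    (hrec : ∀ t : ℕ, a (t + 1) = a t + Real.sqrt (8 * a t) + 2) :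
    ∀ t : ℕ, Real.sqrt (8 * a t) - Real.sqrt (8 * a 0)
      ≤ 4 * t + 2 * Real.log (1 + 2 * t) := by
  have key : ∀ t : ℕ, 0 ≤ a t ∧
      Real.sqrt (8 * a t) = Real.sqrt (8 * a 0) + 4 * t := by
    intro t
    induction t with
    | zero => simp [h0]
    | succ n ih =>
      obtain ⟨hn, hs⟩ := ih
      have hsq : Real.sqrt (8 * a n) ^ 2 = 8 * a n :=
        Real.sq_sqrt (by positivity)
      have hnn : 0 ≤ Real.sqrt (8 * a n) := Real.sqrt_nonneg _
      have han1 : 0 ≤ a (n + 1) := by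
        rw [hrec n]; positivity
      refine ⟨han1, ?_⟩
      have h8 : 8 * a (n + 1) = (Real.sqrt (8 * a n) + 4) ^ 2 := by
        rw [hrec n]; nlinarith [hsq]
      rw [h8, Real.sqrt_sq (by positivity), hs]
      push_cast
      ring
  intro t
  have hlog : 0 ≤ Real.log (1 + 2 * t) := by
    apply Real.log_nonneg
    have : (0:ℝ) ≤ 2 * t := by positivity
    linarith
  have := (key t).2
  rw [this]
  linarith
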